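/- Let Σ∞ ⊆ Σ, let L₁, L₂ be sparse regular languages over Σ, and suppose that for all N the states |L_i^N⟩ = Σ_{w∈L_i∩Σ^N}|w⟩ satisfy |L₂^N⟩ = U^{⊗N}|L₁^N⟩ for a fixed unitary U on ℂ^{|Σ|}. Suppose further that for some x ∈ Σ∞ there exist fixed strings s₁, s₂ (with a = |s₁|+|s₂|) such that s₁ x^{N−a} s₂ ∈ L₂ for all large N. If |⟨x|U|y⟩| ≤ λ < 1 for all y ∈ Σ, then a contradiction follows; hence there exists y ∈ Σ with |⟨x|U|y⟩| = 1, i.e., U maps some basis vector to x up to phase. -/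

import Mathlib

open Matrix

/-- A nondeterministic finite automaton with alphabet `α` and state type `σ`. -/
structure FinNFA (α σ : Type*) where
  step : σ → α → Finset σ
  start : Finset σ
  accept : Finset σ

/-- The type of accepting paths of the NFA `M` on the word `w`. -/
def AcceptingPath {α σ : Type*} (M : FinNFA α σ) (w : List α) : Type _ :=
  { r : Fin (w.length + 1) → σ //
      r 0 ∈ M.start ∧ r (Fin.last w.length) ∈ M.accept ∧
      ∀ k : Fin w.length, r k.succ ∈ M.step (r k.castSucc) (w.get k) }

/-- `L` is regular: it is the language accepted by some finite automaton. -/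
def RegularLang {d : ℕ} (L : Set (List (Fin d))) : Prop :=
  ∃ (D : ℕ) (M : FinNFA (Fin d) (Fin D)),
    ∀ w : List (Fin d), w ∈ L ↔ Nonempty (AcceptingPath M w)

/-- `L` is sparse: the number of its words of length `N` is `O(poly(N))`. -/
def IsSparse {d : ℕ} (L : Set (List (Fin d))) : Prop :=
  ∃ C k : ℕ, ∀ N : ℕ, {w ∈ L | w.length = N}.ncard ≤ C * (N + 1) ^ k

lemma entryAbsLeOne {d : ℕ} {U : Matrix (Fin d) (Fin d) ℂ}
    (hU : U ∈ Matrix.unitaryGroup (Fin d) ℂ) (i j : Fin d) : ‖U i j‖ ≤ 1 := by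
  have h1 : U * star U = 1 := (Matrix.mem_unitaryGroup_iff).mp hU
  have h2 : (U * star U) i i = 1 := by rw [h1]; simp [Matrix.one_apply]
  have h3 : ∑ m, (Complex.normSq (U i m) : ℂ) = 1 := by
    simpa [Matrix.mul_apply, Matrix.star_apply, Complex.mul_conj] using h2
  have h4 : ∑ m, Complex.normSq (U i m) = 1 := by exact_mod_cast h3
  have h5 : Complex.normSq (U i j) ≤ 1 := by
    rw [← h4]
    exact Finset.single_le_sum (fun m _ => Complex.normSq_nonneg _) (Finset.mem_univ j)
  have h6 : (‖U i j‖) ^ 2 ≤ 1 := by rwa [Complex.sq_norm]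
  exact (pow_le_one_iff_of_nonneg (norm_nonneg _) two_ne_zero).mp h6

/-- If two sparse regular languages satisfy `|L₂^N⟩ = U^{⊗N}|L₁^N⟩` for all `N` with a
fixed unitary `U`, and `L₂` contains words `s₁ x^{N−a} s₂` for all large `N` (so that
`x ∈ Σ∞`), then some matrix element `⟨x|U|y⟩` has modulus one: assuming
`|⟨x|U|y⟩| ≤ λ < 1` for all `y` leads to a contradiction, since
`1 = ⟨s₁ x^{N−a} s₂|U^{⊗N}|L₁^N⟩` is a sum of `O(poly(N))` terms each of modulus at most
`λ^{N−a}`. -/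
theorem stmt14 {d : ℕ} (L1 L2 : Set (List (Fin d))) (U : Matrix (Fin d) (Fin d) ℂ)
    (x : Fin d)
    (hreg1 : RegularLang L1) (hreg2 : RegularLang L2)
    (hsp1 : IsSparse L1) (hsp2 : IsSparse L2)
    (hU : U ∈ Matrix.unitaryGroup (Fin d) ℂ)
    (hrel : ∀ w : List (Fin d),
      L2.indicator (fun _ => (1 : ℂ)) w =
        ∑ᶠ v ∈ {v : List (Fin d) | v ∈ L1 ∧ v.length = w.length},
          ∏ k : Fin w.length, U (w.get k) (v.getD (k : ℕ) x))
    (s1 s2 : List (Fin d))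
    (hword : ∀ᶠ N in Filter.atTop,
      s1 ++ List.replicate (N - (s1.length + s2.length)) x ++ s2 ∈ L2) :
    ∃ y : Fin d, ‖U x y‖ = 1 := by
  by_contra hcon
  push_neg at hcon
  set a := s1.length + s2.length with ha
  have hd : (Finset.univ : Finset (Fin d)).Nonempty := ⟨x, Finset.mem_univ x⟩
  set lam := Finset.univ.sup' hd (fun y => ‖U x y‖) with hlamdef
  have hlam_le : ∀ y, ‖U x y‖ ≤ lam :=
    fun y => Finset.le_sup' (fun y => ‖U x y‖) (Finset.mem_univ y)
  have hlam0 : (0 : ℝ) ≤ lam := le_trans (norm_nonneg _) (hlam_le x)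
  have hlam1 : lam < 1 := by
    rw [hlamdef, Finset.sup'_lt_iff]
    intro y _
    exact lt_of_le_of_ne (entryAbsLeOne hU x y) (hcon y)
  obtain ⟨C, k, hC⟩ := hsp1
  -- the polynomial-times-geometric bound tends to zero
  have ht0 : Filter.Tendsto (fun n : ℕ => (n : ℝ) ^ k * lam ^ n) Filter.atTop (nhds 0) := by
    have hs : Summable (fun n : ℕ => ‖(n : ℝ) ^ k * lam ^ n‖) :=
      summable_norm_pow_mul_geometric_of_norm_lt_one k
        (by rwa [Real.norm_eq_abs, abs_of_nonneg hlam0])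
    exact (Summable.of_norm hs).tendsto_atTop_zero
  have hev1 : ∀ᶠ M : ℕ in Filter.atTop,
      (C : ℝ) * ((a : ℝ) + 2) ^ k * ((M : ℝ) ^ k * lam ^ M) < 1 := by
    have h := ht0.const_mul ((C : ℝ) * ((a : ℝ) + 2) ^ k)
    rw [mul_zero] at h
    exact h.eventually_lt_const one_pos
  obtain ⟨M, hM1, hwmem, hsmall⟩ :=
    ((Filter.eventually_ge_atTop 1).and
      (((Filter.tendsto_add_atTop_nat a).eventually hword).and hev1)).exists
  -- the word
  set t := List.replicate M x with htdef
  have hMa : M + a - (s1.length + s2.length) = M := by omega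
  rw [hMa] at hwmem
  set w := s1 ++ t ++ s2 with hwdef
  have hw2 : w ∈ L2 := hwmem
  have hwlen : w.length = M + a := by
    simp [hwdef, htdef, ha]; omega
  -- the finite set of terms
  set S : Set (List (Fin d)) := {v | v ∈ L1 ∧ v.length = w.length} with hSdef
  have hSfin : S.Finite :=
    (List.finite_length_eq (Fin d) w.length).subset (fun v hv => hv.2)
  -- the index set of middle positions
  have hmid : ∀ i : Fin M, s1.length + (i : ℕ) < w.length := by
    intro i
    rw [hwlen]; omega
  set T : Finset (Fin w.length) :=
    Finset.image (fun i : Fin M => (⟨s1.length + (i : ℕ), hmid i⟩ : Fin w.length))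
      Finset.univ with hTdef
  have hTcard : T.card = M := by
    rw [hTdef, Finset.card_image_of_injective _ ?_, Finset.card_univ, Fintype.card_fin]
    intro i j hij
    have : s1.length + (i : ℕ) = s1.length + (j : ℕ) := congrArg Fin.val hij
    exact Fin.ext (by omega)
  have hgetT : ∀ p ∈ T, w.get p = x := by
    intro p hp
    rw [hTdef, Finset.mem_image] at hp
    obtain ⟨i, _, rfl⟩ := hp
    have hi1 : s1.length + (i : ℕ) < (s1 ++ t).length := by
      simp only [List.length_append, htdef, List.length_replicate]; omega
    simp only [List.get_eq_getElem, hwdef]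
    rw [List.getElem_append_left hi1, List.getElem_append_right (by omega)]
    simp [htdef]
  -- each term is small
  have hterm : ∀ v : List (Fin d),
      ‖∏ kk : Fin w.length, U (w.get kk) (v.getD (kk : ℕ) x)‖ ≤ lam ^ M := by
    intro v
    rw [norm_prod]
    have h1 : ∏ kk ∈ T, ‖U (w.get kk) (v.getD (kk : ℕ) x)‖ ≤ lam ^ M := by
      calc ∏ kk ∈ T, ‖U (w.get kk) (v.getD (kk : ℕ) x)‖
          ≤ ∏ _kk ∈ T, lam := by
            refine Finset.prod_le_prod (fun p _ => norm_nonneg _) (fun p hp => ?_)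
            rw [hgetT p hp]; exact hlam_le _
        _ = lam ^ M := by rw [Finset.prod_const, hTcard]
    have h2 : ∏ kk ∈ Tᶜ, ‖U (w.get kk) (v.getD (kk : ℕ) x)‖ ≤ 1 :=
      Finset.prod_le_one (fun p _ => norm_nonneg _)
        (fun p _ => entryAbsLeOne hU _ _)
    calc ∏ kk : Fin w.length, ‖U (w.get kk) (v.getD (kk : ℕ) x)‖
        = (∏ kk ∈ T, ‖U (w.get kk) (v.getD (kk : ℕ) x)‖) *
            ∏ kk ∈ Tᶜ, ‖U (w.get kk) (v.getD (kk : ℕ) x)‖ :=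
          (Finset.prod_mul_prod_compl T _).symm
      _ ≤ lam ^ M * 1 :=
          mul_le_mul h1 h2
            (Finset.prod_nonneg (fun p _ => norm_nonneg _)) (pow_nonneg hlam0 M)
      _ = lam ^ M := mul_one _
  -- turn the relation into a finite sum
  have hEq := hrel w
  rw [Set.indicator_of_mem hw2] at hEq
  rw [finsum_mem_eq_finite_toFinset_sum _ hSfin] at hEq
  have hone : (1 : ℝ) ≤ (hSfin.toFinset.card : ℝ) * lam ^ M := by
    calc (1 : ℝ) = ‖∑ v ∈ hSfin.toFinset,
          ∏ kk : Fin w.length, U (w.get kk) (v.getD (kk : ℕ) x)‖ := by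
          rw [← hEq]; simp
      _ ≤ ∑ v ∈ hSfin.toFinset,
            ‖∏ kk : Fin w.length, U (w.get kk) (v.getD (kk : ℕ) x)‖ :=
          norm_sum_le _ _
      _ ≤ hSfin.toFinset.card • (lam ^ M) :=
          Finset.sum_le_card_nsmul _ _ _ (fun v _ => hterm v)
      _ = (hSfin.toFinset.card : ℝ) * lam ^ M := nsmul_eq_mul _ _
  -- cardinality bound
  have hSeq : S = {v | v ∈ L1 ∧ v.length = M + a} := by rw [hSdef, hwlen]
  have hcard : hSfin.toFinset.card ≤ C * (M + a + 1) ^ k := by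
    rw [← Set.ncard_eq_toFinset_card S hSfin, hSeq]
    exact hC (M + a)
  -- final contradiction
  have hpow0 : (0 : ℝ) ≤ lam ^ M := pow_nonneg hlam0 M
  have hnat : M + a + 1 ≤ (a + 2) * M := by nlinarith
  have hc1 : (hSfin.toFinset.card : ℝ) ≤ (C : ℝ) * ((M : ℝ) + (a : ℝ) + 1) ^ k := by
    exact_mod_cast hcard
  have hc2 : ((M : ℝ) + (a : ℝ) + 1) ^ k ≤ ((a : ℝ) + 2) ^ k * (M : ℝ) ^ k := by
    rw [← mul_pow]
    exact pow_le_pow_left₀ (by positivity) (by exact_mod_cast hnat) k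
  have : (1 : ℝ) < 1 := by
    calc (1 : ℝ) ≤ (hSfin.toFinset.card : ℝ) * lam ^ M := hone
      _ ≤ ((C : ℝ) * (((M : ℝ) + (a : ℝ) + 1) ^ k)) * lam ^ M :=
          mul_le_mul_of_nonneg_right hc1 hpow0
      _ ≤ ((C : ℝ) * (((a : ℝ) + 2) ^ k * (M : ℝ) ^ k)) * lam ^ M := by
          refine mul_le_mul_of_nonneg_right ?_ hpow0
          exact mul_le_mul_of_nonneg_left hc2 (by positivity)
      _ = (C : ℝ) * ((a : ℝ) + 2) ^ k * ((M : ℝ) ^ k * lam ^ M) := by ring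
      _ < 1 := hsmall
  exact absurd this (lt_irrefl 1)
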